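/- The semantic mapping f(s, M) := s from SCDS configurations (of the compiled system) to SC ledgers, which forgets the message store, is a strict morphism, and hence the compiled SCDS implements the abstract social contract SC. -/

import Mathlib

variable {V A : Type*}

/-- `h` restricted to acts authored by `u`. -/
def restrictH [DecidableEq V] (h : List (V × A)) (u : V) : List (V × A) :=
  h.filter (fun m => m.1 = u)

/-- The abstract social contract transition relation determined by the output-closed
enabling condition `Tout` (outputs depend only on the acting agent's history) and
input-closure (every sound input transition is included). -/
def SCT [DecidableEq V] (Tout : V → List (V × A) → A → Prop)
    (l l' : V → List (V × A)) : Prop :=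
  -- output v-transition, enabled as a function of l_v alone
  (∃ (v : V) (a : A), Tout v (l v) a ∧
    l' = Function.update l v (l v ++ [(v, a)])) ∨
  -- sound input v-transition (input-closed: all of these are in T)
  (∃ (v u : V) (a : A), u ≠ v ∧
    restrictH (l v ++ [(u, a)]) u <+: restrictH (l u) u ∧
    l' = Function.update l v (l v ++ [(u, a)]))

/-- Ledgers reachable in the abstract social contract from the all-empty ledger. -/
def SCReachable [DecidableEq V] (Tout : V → List (V × A) → A → Prop)
    (l : V → List (V × A)) : Prop :=
  Relation.ReflTransGen (SCT Tout) (fun _ => []) l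

/-- A compiled-SCDS configuration: the ledger of histories together with per-pair
FIFO queues of in-flight messages. -/
structure CConfig (V A : Type*) where
  hist : V → List (V × A)
  queue : V → V → List (V × A)

/-- A step of the compiled SCDS: outputs are enabled exactly when the corresponding SC
output transition is, and are broadcast to the store; inputs consume the oldest
in-flight message. -/
def CStep [DecidableEq V] (Tout : V → List (V × A) → A → Prop)
    (c c' : CConfig V A) : Prop :=
  (∃ (v : V) (a : A), Tout v (c.hist v) a ∧
    c'.hist = Function.update c.hist v (c.hist v ++ [(v, a)]) ∧
    c'.queue = fun x y => if x = v ∧ y ≠ v then c.queue x y ++ [(v, a)] else c.queue x y) ∨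
  (∃ (u v : V) (m : V × A) (rest : List (V × A)), u ≠ v ∧
    c.queue u v = m :: rest ∧
    c'.hist = Function.update c.hist v (c.hist v ++ [m]) ∧
    c'.queue = fun x y => if x = u ∧ y = v then rest else c.queue x y)

/-- SCDS configurations reachable from the initial configuration. -/
def CReachable [DecidableEq V] (Tout : V → List (V × A) → A → Prop)
    (c : CConfig V A) : Prop :=
  Relation.ReflTransGen (CStep Tout) ⟨fun _ => [], fun _ _ => []⟩ c

section Aux
variable [DecidableEq V]

lemma rh_append (h h' : List (V × A)) (u : V) :
    restrictH (h ++ h') u = restrictH h u ++ restrictH h' u := by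
  simp [restrictH]

lemma rh_single_eq (u : V) (a : A) : restrictH ([(u, a)] : List (V × A)) u = [(u, a)] := by
  simp [restrictH]

lemma rh_single_ne {w u : V} (h : w ≠ u) (a : A) :
    restrictH ([(w, a)] : List (V × A)) u = [] := by
  simp [restrictH, h]

lemma rh_append_eq (h : List (V × A)) (u : V) (a : A) :
    restrictH (h ++ [(u, a)]) u = restrictH h u ++ [(u, a)] := by
  simp [restrictH]

lemma rh_append_ne (h : List (V × A)) {w u : V} (hwu : w ≠ u) (a : A) :
    restrictH (h ++ [(w, a)]) u = restrictH h u := by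
  simp [restrictH, hwu]

/-- The message-store invariant. -/
def SCInv (c : CConfig V A) : Prop :=
  ∀ u v : V, u ≠ v →
    (restrictH (c.hist v) u ++ c.queue u v = restrictH (c.hist u) u ∧
      ∀ m ∈ c.queue u v, m.1 = u)

lemma inv_step {Tout : V → List (V × A) → A → Prop} {c c' : CConfig V A}
    (hI : SCInv c) (hs : CStep Tout c c') : SCInv c' := by
  rcases hs with ⟨v, a, _, hh, hq⟩ | ⟨u', v, m, rest, huv, hqm, hh, hq⟩
  · intro u w huw
    obtain ⟨heq, hmem⟩ := hI u w huw
    rw [hh, hq]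
    simp only [Function.update_apply]
    rcases eq_or_ne u v with rfl | hu
    · refine ⟨?_, ?_⟩
      · simp [Ne.symm huw, rh_append_eq, ← heq]
      · intro x hx
        simp [Ne.symm huw] at hx
        rcases hx with hx | rfl
        · exact hmem x hx
        · rfl
    · refine ⟨?_, ?_⟩
      · rcases eq_or_ne w v with rfl | hw
        · simp [hu, rh_append_ne _ (Ne.symm hu), heq]
        · simp [hu, hw, heq]
      · intro x hx
        simp [hu] at hx
        exact hmem x hx
  · intro u w huw
    obtain ⟨heq, hmem⟩ := hI u w huw
    have hm1 : m.1 = u' := (hI u' v huv).2 m (hqm ▸ (List.mem_cons_self : m ∈ m :: rest))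
    rw [hh, hq]
    simp only [Function.update_apply]
    constructor
    · rcases eq_or_ne w v with h | hw
      · subst h
        rcases eq_or_ne u u' with h2 | hu
        · subst h2
          rw [if_pos rfl, if_pos ⟨rfl, rfl⟩, if_neg huw, rh_append]
          have hm : restrictH [m] u = [m] := by simp [restrictH, hm1]
          rw [hm, List.append_assoc, List.singleton_append, ← hqm]
          exact heq
        · rw [if_pos rfl, if_neg (fun hc => hu hc.1), if_neg huw, rh_append]
          have hm0 : restrictH [m] u = [] := by simp [restrictH, hm1, Ne.symm hu]
          rw [hm0, List.append_nil]
          exact heq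
      · rw [if_neg hw, if_neg (fun hc => hw hc.2)]
        rcases eq_or_ne u v with h2 | hu2
        · subst h2
          rw [if_pos rfl, rh_append]
          have hm0 : restrictH [m] u = [] := by simp [restrictH, hm1, huv]
          rw [hm0, List.append_nil]
          exact heq
        · rw [if_neg hu2]; exact heq
    · intro x hx
      by_cases hc : u = u' ∧ w = v
      · rw [if_pos hc] at hx
        have : x ∈ c.queue u w := by
          rw [hc.1, hc.2, hqm]; exact List.mem_cons_of_mem m hx
        exact hmem x this
      · rw [if_neg hc] at hx; exact hmem x hx

lemma inv_reachable {Tout : V → List (V × A) → A → Prop} {c : CConfig V A}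
    (h : CReachable Tout c) : SCInv c := by
  induction h with
  | refl => intro u v _; simp [restrictH]
  | tail _ hs ih => exact inv_step ih hs

lemma match_back {Tout : V → List (V × A) → A → Prop} (c : CConfig V A)
    (l' : V → List (V × A)) (hI : SCInv c) (hsc : SCT Tout c.hist l') :
    ∃ c' : CConfig V A, CStep Tout c c' ∧ c'.hist = l' := by
  rcases hsc with ⟨v, a, hT, hl⟩ | ⟨v, u, a, huv, hpre, hl⟩
  · refine ⟨⟨Function.update c.hist v (c.hist v ++ [(v, a)]),
      fun x y => if x = v ∧ y ≠ v then c.queue x y ++ [(v, a)] else c.queue x y⟩,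
      Or.inl ⟨v, a, hT, rfl, rfl⟩, hl.symm⟩
  · obtain ⟨heq, _⟩ := hI u v huv
    rw [rh_append, rh_single_eq] at hpre
    have hpre2 : restrictH (c.hist v) u ++ [(u, a)] <+: restrictH (c.hist v) u ++ c.queue u v := by
      rw [heq]; exact hpre
    have h1 : [(u, a)] <+: c.queue u v := (List.prefix_append_right_inj _).mp hpre2
    obtain ⟨t, ht⟩ := h1
    refine ⟨⟨Function.update c.hist v (c.hist v ++ [(u, a)]),
      fun x y => if x = u ∧ y = v then t else c.queue x y⟩,
      Or.inr ⟨u, v, (u, a), t, huv, by rw [← ht]; rfl, rfl, rfl⟩, hl.symm⟩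

end Aux

/-- The mapping `f(s, M) := s`, forgetting the message store, is a strict morphism from
the compiled SCDS to the abstract social contract on reachable states: (1) it maps the
initial configuration to the initial ledger; (2) every SCDS transition projects to an SC
transition; (3) every SC transition from the ledger of a reachable configuration is
matched by an SCDS transition with the right projection; hence (together with (4):
every reachable ledger is the image of a reachable configuration) the compiled SCDS
implements SC via `f`. -/
theorem forget_store_strict_morphism [DecidableEq V]
    (Tout : V → List (V × A) → A → Prop) :
    ((fun _ => []) = (CConfig.hist (V := V) (A := A) ⟨fun _ => [], fun _ _ => []⟩)) ∧
    (∀ c c' : CConfig V A, CReachable Tout c → CStep Tout c c' →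
      SCT Tout c.hist c'.hist) ∧
    (∀ (c : CConfig V A) (l' : V → List (V × A)), CReachable Tout c →
      SCT Tout c.hist l' → ∃ c' : CConfig V A, CStep Tout c c' ∧ c'.hist = l') ∧
    (∀ l : V → List (V × A), SCReachable Tout l →
      ∃ c : CConfig V A, CReachable Tout c ∧ c.hist = l) := by
  refine ⟨rfl, ?_, ?_, ?_⟩
  · intro c c' hr hs
    rcases hs with ⟨v, a, hT, hh, _⟩ | ⟨u, v, m, rest, huv, hqm, hh, _⟩
    · exact Or.inl ⟨v, a, hT, hh⟩
    · have hI := inv_reachable hr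
      obtain ⟨heq, hmem⟩ := hI u v huv
      have hm1 : m.1 = u := hmem m (hqm ▸ (List.mem_cons_self : m ∈ m :: rest))
      have hm : ((u, m.2) : V × A) = m := by rw [← hm1]
      refine Or.inr ⟨v, u, m.2, huv, ?_, by rw [hh, hm]⟩
      rw [rh_append, rh_single_eq u m.2, hm, ← heq, hqm]
      exact ⟨rest, by simp⟩
  · intro c l' hr hsc
    exact match_back c l' (inv_reachable hr) hsc
  · intro l hl
    induction hl with
    | refl => exact ⟨⟨fun _ => [], fun _ _ => []⟩, Relation.ReflTransGen.refl, rfl⟩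
    | tail _ hs ih =>
      obtain ⟨c, hcr, hch⟩ := ih
      obtain ⟨c', hstep, hh'⟩ := match_back c _ (inv_reachable hcr) (hch ▸ hs)
      exact ⟨c', hcr.tail hstep, hh'⟩
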